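/- If 2 is a primitive root modulo an odd prime p, then the set P of even-weight polynomials in F_2[x]/(x^p - 1) is a field isomorphic to F_{2^{p-1}}, with multiplicative identity e(x) = x + x^2 + ... + x^{p-1}. -/

import Mathlib

open Polynomial
open scoped IntermediateField

/-- The quotient ring `F_2[x]/(x^p - 1)`. -/
abbrev QuotRing (p : ℕ) : Type :=
  Polynomial (ZMod 2) ⧸ Ideal.span {(X : Polynomial (ZMod 2)) ^ p - 1}

/-- The canonical projection `F_2[x] → F_2[x]/(x^p - 1)`. -/
noncomputable def quotMk (p : ℕ) : Polynomial (ZMod 2) →+* QuotRing p :=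
  Ideal.Quotient.mk _

/-- The set `P` of classes of even-weight polynomials in `F_2[x]/(x^p - 1)`,
where the weight of a polynomial is its number of nonzero coefficients. -/
noncomputable def evenWeightSet (p : ℕ) : Set (QuotRing p) :=
  quotMk p '' {q : Polynomial (ZMod 2) | Even q.support.card}

private lemma zmod2_eval_one (q : Polynomial (ZMod 2)) :
    q.eval 1 = (q.support.card : ZMod 2) := by
  rw [eval_eq_sum, Polynomial.sum_def, Finset.card_eq_sum_ones, Nat.cast_sum]
  refine Finset.sum_congr rfl fun i hi => ?_
  have h1 : ∀ a : ZMod 2, a ≠ 0 → a = 1 := by decide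
  rw [one_pow, mul_one, h1 _ (Polynomial.mem_support_iff.mp hi), Nat.cast_one]

/-- Evaluation at 1 descends to the quotient. -/
noncomputable def epsHom (p : ℕ) : QuotRing p →+* ZMod 2 :=
  Ideal.Quotient.lift _ (evalRingHom (1 : ZMod 2)) <| by
    intro a ha
    rw [Ideal.mem_span_singleton] at ha
    obtain ⟨c, rfl⟩ := ha
    simp

lemma epsHom_mk (p : ℕ) (q : Polynomial (ZMod 2)) :
    epsHom p (quotMk p q) = q.eval 1 := rfl

lemma mem_evenWeightSet_iff (p : ℕ) (r : QuotRing p) :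
    r ∈ evenWeightSet p ↔ epsHom p r = 0 := by
  constructor
  · rintro ⟨q, hq, rfl⟩
    rw [epsHom_mk, zmod2_eval_one, ZMod.natCast_eq_zero_iff]
    exact hq.two_dvd
  · intro h
    obtain ⟨q, rfl⟩ := Ideal.Quotient.mk_surjective r
    refine ⟨q, ?_, rfl⟩
    have h' : q.eval 1 = 0 := h
    rw [zmod2_eval_one, ZMod.natCast_eq_zero_iff] at h'
    exact (even_iff_two_dvd).mpr h'

theorem evenWeightSet_is_field (p : ℕ) (hp : p.Prime) (hodd : Odd p)
    (h2 : orderOf (2 : ZMod p) = p - 1) :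
    letI e : QuotRing p := quotMk p (∑ i ∈ Finset.Icc 1 (p - 1), X ^ i)
    e ∈ evenWeightSet p ∧
    (∀ a ∈ evenWeightSet p, e * a = a ∧ a * e = a) ∧
    ∃ F : {a : QuotRing p // a ∈ evenWeightSet p} ≃ GaloisField 2 (p - 1),
      (∀ a b : {a : QuotRing p // a ∈ evenWeightSet p},
        ∃ h : (a : QuotRing p) + b ∈ evenWeightSet p, F ⟨(a : QuotRing p) + b, h⟩ = F a + F b) ∧
      (∀ a b : {a : QuotRing p // a ∈ evenWeightSet p},
        ∃ h : (a : QuotRing p) * b ∈ evenWeightSet p, F ⟨(a : QuotRing p) * b, h⟩ = F a * F b) := by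
  haveI : Fact p.Prime := ⟨hp⟩
  haveI : Fact (Nat.Prime 2) := ⟨Nat.prime_two⟩
  have hp2 : p ≠ 2 := by rintro rfl; exact (Nat.not_odd_iff_even.mpr even_two) hodd
  have hple := hp.two_le
  have hp3 : 3 ≤ p := by omega
  have hn : p - 1 ≠ 0 := by omega
  haveI : Fintype (GaloisField 2 (p - 1)) := Fintype.ofFinite _
  have hcardK : Fintype.card (GaloisField 2 (p - 1)) = 2 ^ (p - 1) := by
    have h := GaloisField.card 2 (p - 1) hn
    rwa [Nat.card_eq_fintype_card] at h
  -- an element of multiplicative order p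
  obtain ⟨g, hg⟩ := IsCyclic.exists_ofOrder_eq_natCard (α := (GaloisField 2 (p - 1))ˣ)
  have hcardKu : Nat.card (GaloisField 2 (p - 1))ˣ = 2 ^ (p - 1) - 1 := by
    classical
    rw [Nat.card_eq_fintype_card, Fintype.card_units, hcardK]
  have h2pow : (2 : ZMod p) ^ (p - 1) = 1 := by rw [← h2]; exact pow_orderOf_eq_one _
  have hpdvd : p ∣ 2 ^ (p - 1) - 1 := by
    have hle : 1 ≤ 2 ^ (p - 1) := Nat.one_le_two_pow
    have hc : ((2 ^ (p - 1) - 1 : ℕ) : ZMod p) = 0 := by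
      rw [Nat.cast_sub hle]
      push_cast
      rw [h2pow, sub_self]
    exact (ZMod.natCast_eq_zero_iff _ _).mp hc
  obtain ⟨k, hk⟩ := hpdvd
  have hpow2 : 2 ≤ 2 ^ (p - 1) := by
    calc 2 = 2 ^ 1 := by norm_num
    _ ≤ 2 ^ (p - 1) := Nat.pow_le_pow_right (by norm_num) (by omega)
  have hk0 : k ≠ 0 := by rintro rfl; omega
  have hgk : orderOf (g ^ k) = p := by
    rw [orderOf_pow, hg, hcardKu, hk, Nat.gcd_eq_right ⟨p, by ring⟩,
      Nat.mul_div_cancel _ (Nat.pos_of_ne_zero hk0)]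
  set ζ : GaloisField 2 (p - 1) := ((g ^ k : _ˣ) : GaloisField 2 (p - 1)) with hζdef
  have hordζ : orderOf ζ = p := by rw [orderOf_units]; exact hgk
  have hζp : ζ ^ p = 1 := by
    have h := pow_orderOf_eq_one ζ
    rwa [hordζ] at h
  have hζ1 : ζ ≠ 1 := by
    intro h
    rw [h, orderOf_one] at hordζ
    omega
  have hζ0 : ζ ≠ 0 := Units.ne_zero _
  have hgeom : ∑ i ∈ Finset.range p, ζ ^ i = 0 := by
    have h := geom_sum_mul ζ p
    rw [hζp, sub_self] at h
    rcases mul_eq_zero.mp h with h | h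
    · exact h
    · exact absurd (sub_eq_zero.mp h) hζ1
  -- the projection to the Galois field
  have hlift : ∀ a ∈ Ideal.span {(X : Polynomial (ZMod 2)) ^ p - 1},
      (aeval ζ).toRingHom a = 0 := by
    intro a ha
    rw [Ideal.mem_span_singleton] at ha
    obtain ⟨c, rfl⟩ := ha
    simp only [AlgHom.toRingHom_eq_coe, RingHom.coe_coe, map_mul, map_sub, map_pow, aeval_X,
      map_one, hζp, sub_self, zero_mul]
  obtain ⟨π, hπmk⟩ : ∃ π : QuotRing p →+* GaloisField 2 (p - 1),
      ∀ q : Polynomial (ZMod 2), π (quotMk p q) = aeval ζ q :=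
    ⟨Ideal.Quotient.lift _ (aeval ζ).toRingHom hlift, fun q => rfl⟩
  -- minimal polynomial degree
  have hint : IsIntegral (ZMod 2) ζ := IsIntegral.of_finite _ _
  have hmirr := minpoly.irreducible hint
  have hmmonic := minpoly.monic hint
  have hKfr : Module.finrank (ZMod 2) (GaloisField 2 (p - 1)) = p - 1 :=
    GaloisField.finrank 2 hn
  haveI : FiniteDimensional (ZMod 2) ((ZMod 2)⟮ζ⟯) :=
    IntermediateField.adjoin.finiteDimensional hint
  haveI : Fintype ((ZMod 2)⟮ζ⟯) := Fintype.ofFinite _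
  have hdF : Module.finrank (ZMod 2) ((ZMod 2)⟮ζ⟯) = p - 1 := by
    have hdvd1 : Module.finrank (ZMod 2) ((ZMod 2)⟮ζ⟯) ∣ p - 1 := by
      have h := Module.finrank_mul_finrank (ZMod 2) ((ZMod 2)⟮ζ⟯) (GaloisField 2 (p - 1))
      rw [hKfr] at h
      exact ⟨_, h.symm⟩
    have hdvd2 : p - 1 ∣ Module.finrank (ZMod 2) ((ZMod 2)⟮ζ⟯) := by
      set d := Module.finrank (ZMod 2) ((ZMod 2)⟮ζ⟯) with hd
      have hζF : ζ ∈ (ZMod 2)⟮ζ⟯ := IntermediateField.mem_adjoin_simple_self _ ζ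
      set ζF : ((ZMod 2)⟮ζ⟯) := ⟨ζ, hζF⟩ with hζF'
      have hζF0 : ζF ≠ 0 := fun h => hζ0 (congrArg Subtype.val h)
      have hordF : orderOf ζF = p := by
        have h := orderOf_injective ((ZMod 2)⟮ζ⟯.val.toRingHom.toMonoidHom)
          (fun a b hab => Subtype.ext hab) ζF
        rw [← h]
        exact hordζ
      have hpowF : ζF ^ (Fintype.card ((ZMod 2)⟮ζ⟯) - 1) = 1 :=
        FiniteField.pow_card_sub_one_eq_one ζF hζF0
      have hdvd : p ∣ Fintype.card ((ZMod 2)⟮ζ⟯) - 1 := by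
        have h := orderOf_dvd_of_pow_eq_one hpowF
        rwa [hordF] at h
      have hcardF : Fintype.card ((ZMod 2)⟮ζ⟯) = 2 ^ d := by
        rw [Module.card_eq_pow_finrank (K := ZMod 2), ZMod.card]
      rw [hcardF] at hdvd
      have hle : 1 ≤ 2 ^ d := Nat.one_le_two_pow
      have hc : ((2 ^ d - 1 : ℕ) : ZMod p) = 0 :=
        (ZMod.natCast_eq_zero_iff _ _).mpr hdvd
      rw [Nat.cast_sub hle] at hc
      push_cast at hc
      have h1 : (2 : ZMod p) ^ d = 1 := by
        have := sub_eq_zero.mp hc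
        exact this
      rw [← h2]
      exact orderOf_dvd_of_pow_eq_one h1
    exact Nat.dvd_antisymm hdvd1 hdvd2
  have hdm : (minpoly (ZMod 2) ζ).natDegree = p - 1 := by
    rw [← IntermediateField.adjoin.finrank hint]
    exact hdF
  -- surjectivity of aeval ζ
  have haevalsurj : ∀ y : GaloisField 2 (p - 1), ∃ f : Polynomial (ZMod 2), aeval ζ f = y := by
    intro y
    have htop : Subalgebra.toSubmodule ((ZMod 2)⟮ζ⟯).toSubalgebra = ⊤ := by
      apply Submodule.eq_top_of_finrank_eq
      rw [hKfr]
      exact hdF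
    have hy : y ∈ ((ZMod 2)⟮ζ⟯).toSubalgebra := by
      have : y ∈ Subalgebra.toSubmodule ((ZMod 2)⟮ζ⟯).toSubalgebra := by
        rw [htop]; trivial
      exact this
    rw [IntermediateField.adjoin_simple_toSubalgebra_of_isAlgebraic hint.isAlgebraic,
      Algebra.adjoin_singleton_eq_range_aeval] at hy
    obtain ⟨f, hf⟩ := hy
    exact ⟨f, hf⟩
  -- injectivity on the joint kernel
  have hinj : ∀ r : QuotRing p, epsHom p r = 0 → π r = 0 → r = 0 := by
    intro r h0 hπ0
    obtain ⟨f, rfl⟩ := Ideal.Quotient.mk_surjective r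
    have h1 : (X - C (1 : ZMod 2)) ∣ f := by
      rw [dvd_iff_isRoot]
      exact h0
    rw [show (Ideal.Quotient.mk (Ideal.span {(X : Polynomial (ZMod 2)) ^ p - 1})) f
      = quotMk p f from rfl, hπmk] at hπ0
    have hdvdm : minpoly (ZMod 2) ζ ∣ f := minpoly.dvd _ _ hπ0
    have hndvd : ¬ (X - C (1 : ZMod 2)) ∣ minpoly (ZMod 2) ζ := by
      intro hdvd
      have hassoc := (irreducible_X_sub_C (1 : ZMod 2)).associated_of_dvd hmirr hdvd
      have heq := eq_of_monic_of_associated (monic_X_sub_C _) hmmonic hassoc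
      have hd1 : (minpoly (ZMod 2) ζ).natDegree = 1 := by
        rw [← heq, natDegree_X_sub_C]
      rw [hdm] at hd1
      omega
    have hco : IsCoprime (X - C (1 : ZMod 2)) (minpoly (ZMod 2) ζ) :=
      ((irreducible_X_sub_C _).coprime_iff_not_dvd).mpr hndvd
    have hmulm : (X - C (1 : ZMod 2)) * minpoly (ZMod 2) ζ = X ^ p - 1 := by
      have hdvdpow : (X - C (1 : ZMod 2)) * minpoly (ZMod 2) ζ ∣ X ^ p - 1 := by
        refine hco.mul_dvd ?_ ?_
        · rw [dvd_iff_isRoot]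
          simp [IsRoot.def]
        · exact minpoly.dvd _ _ (by rw [map_sub, map_pow, aeval_X, map_one, hζp, sub_self])
      have hmon : ((X - C (1 : ZMod 2)) * minpoly (ZMod 2) ζ).Monic :=
        (monic_X_sub_C _).mul hmmonic
      have hmon2 : ((X : Polynomial (ZMod 2)) ^ p - 1).Monic := by
        simpa using monic_X_pow_sub_C (1 : ZMod 2) (n := p) (by omega)
      refine eq_of_dvd_of_natDegree_le_of_leadingCoeff hdvdpow ?_ ?_
      · rw [natDegree_mul (monic_X_sub_C _).ne_zero hmmonic.ne_zero, natDegree_X_sub_C, hdm]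
        have : ((X : Polynomial (ZMod 2)) ^ p - 1).natDegree = p := by
          simpa using natDegree_X_pow_sub_C (R := ZMod 2) (n := p) (r := 1)
        omega
      · rw [hmon.leadingCoeff, hmon2.leadingCoeff]
    have hfinal : (X : Polynomial (ZMod 2)) ^ p - 1 ∣ f := by
      rw [← hmulm]
      exact hco.mul_dvd h1 hdvdm
    exact Ideal.Quotient.eq_zero_iff_mem.mpr (Ideal.mem_span_singleton.mpr hfinal)
  -- the identity element
  have hIcc : Finset.Icc 1 (p - 1) = Finset.Ico 1 p := by
    rw [← Finset.Ico_add_one_right_eq_Icc]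
    congr 1
    omega
  have hsumζ : ∑ i ∈ Finset.Icc 1 (p - 1), ζ ^ i = 1 := by
    have hsplit : ∑ i ∈ Finset.range p, ζ ^ i = ζ ^ 0 + ∑ i ∈ Finset.Ico 1 p, ζ ^ i := by
      rw [Finset.range_eq_Ico]
      exact Finset.sum_eq_sum_Ico_succ_bot (by omega) _
    rw [hgeom, pow_zero] at hsplit
    rw [hIcc]
    have h' : ∑ i ∈ Finset.Ico 1 p, ζ ^ i = -1 := eq_neg_of_add_eq_zero_right hsplit.symm
    rw [h', CharTwo.neg_eq]
  have hπE : π (quotMk p (∑ i ∈ Finset.Icc 1 (p - 1), X ^ i)) = 1 := by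
    rw [hπmk, map_sum]
    simpa only [map_pow, aeval_X] using hsumζ
  have hεE : epsHom p (quotMk p (∑ i ∈ Finset.Icc 1 (p - 1), X ^ i)) = 0 := by
    rw [epsHom_mk, eval_finset_sum]
    simp only [eval_pow, eval_X, one_pow]
    rw [Finset.sum_const, Nat.card_Icc]
    have heven : Even (p - 1) := Nat.Odd.sub_odd hodd odd_one
    have : ((p - 1 + 1 - 1 : ℕ) : ZMod 2) = 0 := by
      rw [ZMod.natCast_eq_zero_iff]
      simpa using heven.two_dvd
    rw [nsmul_eq_mul, this, zero_mul]
  have hEmem : quotMk p (∑ i ∈ Finset.Icc 1 (p - 1), X ^ i) ∈ evenWeightSet p :=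
    (mem_evenWeightSet_iff p _).mpr hεE
  have hid : ∀ a ∈ evenWeightSet p,
      quotMk p (∑ i ∈ Finset.Icc 1 (p - 1), X ^ i) * a = a := by
    intro a ha
    have hεa := (mem_evenWeightSet_iff p a).mp ha
    have hz : quotMk p (∑ i ∈ Finset.Icc 1 (p - 1), X ^ i) * a - a = 0 := by
      apply hinj
      · rw [map_sub, map_mul, hεE, hεa, zero_mul, sub_zero]
      · rw [map_sub, map_mul, hπE, one_mul, sub_self]
    exact sub_eq_zero.mp hz
  -- surjectivity onto the Galois field
  have hpcast : ((p : ℕ) : ZMod 2) = 1 := by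
    have : p % 2 = 1 := Nat.odd_iff.mp hodd
    rw [← ZMod.natCast_mod, this, Nat.cast_one]
  have hsurj : ∀ y : GaloisField 2 (p - 1),
      ∃ r : QuotRing p, epsHom p r = 0 ∧ π r = y := by
    intro y
    obtain ⟨f, hf⟩ := haevalsurj y
    refine ⟨quotMk p (f + C (f.eval 1) * ∑ i ∈ Finset.range p, X ^ i), ?_, ?_⟩
    · rw [epsHom_mk]
      simp only [eval_add, eval_mul, eval_C, eval_finset_sum, eval_pow, eval_X, one_pow]
      rw [Finset.sum_const, Finset.card_range, nsmul_eq_mul, hpcast, mul_one, mul_one,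
        CharTwo.add_self_eq_zero]
    · rw [hπmk]
      simp only [map_add, map_mul, aeval_C, map_sum, map_pow, aeval_X]
      rw [hgeom, mul_zero, add_zero, hf]
  -- the bijection
  set fS : {a : QuotRing p // a ∈ evenWeightSet p} → GaloisField 2 (p - 1) :=
    fun a => π a.1 with hfS
  have hbij : Function.Bijective fS := by
    constructor
    · rintro ⟨a, ha⟩ ⟨b, hb⟩ hab
      have ha' := (mem_evenWeightSet_iff p _).mp ha
      have hb' := (mem_evenWeightSet_iff p _).mp hb
      have hz : a - b = 0 := by
        apply hinj
        · rw [map_sub, ha', hb', sub_self]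
        · rw [map_sub, sub_eq_zero]
          exact hab
      exact Subtype.ext (sub_eq_zero.mp hz)
    · intro y
      obtain ⟨r, h1', h2'⟩ := hsurj y
      exact ⟨⟨r, (mem_evenWeightSet_iff p r).mpr h1'⟩, h2'⟩
  refine ⟨hEmem, fun a ha => ⟨hid a ha, by rw [mul_comm]; exact hid a ha⟩,
    Equiv.ofBijective fS hbij, ?_, ?_⟩
  · intro a b
    have h : (a : QuotRing p) + b ∈ evenWeightSet p := by
      rw [mem_evenWeightSet_iff, map_add, (mem_evenWeightSet_iff p _).mp a.2,
        (mem_evenWeightSet_iff p _).mp b.2, add_zero]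
    exact ⟨h, by simp only [Equiv.ofBijective_apply, hfS, map_add]⟩
  · intro a b
    have h : (a : QuotRing p) * b ∈ evenWeightSet p := by
      rw [mem_evenWeightSet_iff, map_mul, (mem_evenWeightSet_iff p _).mp a.2,
        zero_mul]
    exact ⟨h, by simp only [Equiv.ofBijective_apply, hfS, map_mul]⟩
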